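/- Let n ≥ 1 and let A = (a_ij) be a positive n×n matrix. Define λ = max over k ∈ {1, …, n} of (tr⊗(A^{⊗k}))^{1/k}, where A^{⊗k} is the k-th max-times power of A and tr⊗ is the max-times trace. Then the infimum over all positive vectors x in ℝⁿ of max_{1≤i,j≤n} a_ij x_j / x_i equals λ, and this infimum is attained by some positive vector x. -/

import Mathlib

/-- Max-times matrix product. -/
noncomputable def maxMul {n : ℕ} (A B : Matrix (Fin n) (Fin n) ℝ) :
    Matrix (Fin n) (Fin n) ℝ :=
  fun i j => ⨆ k, A i k * B k j

/-- Max-times matrix power, with `A^{⊗0} = I` (ones on the diagonal, zeros elsewhere). -/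
noncomputable def maxPow {n : ℕ} (A : Matrix (Fin n) (Fin n) ℝ) : ℕ → Matrix (Fin n) (Fin n) ℝ
  | 0 => fun i j => if i = j then 1 else 0
  | k + 1 => maxMul (maxPow A k) A

/-- Max-times trace. -/
noncomputable def tropTr {n : ℕ} (A : Matrix (Fin n) (Fin n) ℝ) : ℝ := ⨆ i, A i i

namespace TropSR

variable {n : ℕ}

lemma le_fsup [Nonempty (Fin n)] (f : Fin n → ℝ) (i : Fin n) : f i ≤ ⨆ j, f j :=
  le_ciSup (Set.Finite.bddAbove (Set.finite_range f)) i

lemma fsup_le [Nonempty (Fin n)] {f : Fin n → ℝ} {a : ℝ} (h : ∀ i, f i ≤ a) :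
    (⨆ j, f j) ≤ a := ciSup_le h

lemma fsup_attained [Nonempty (Fin n)] (f : Fin n → ℝ) : ∃ i, (⨆ j, f j) = f i := by
  obtain ⟨i, hi⟩ := Finite.exists_max f
  exact ⟨i, le_antisymm (fsup_le hi) (le_fsup f i)⟩

lemma fsup_div [Nonempty (Fin n)] (f : Fin n → ℝ) {c : ℝ} (hc : 0 < c) :
    (⨆ i, f i) / c = ⨆ i, f i / c := by
  obtain ⟨i0, h0⟩ := Finite.exists_max f
  have h1 : (⨆ i, f i) = f i0 := le_antisymm (fsup_le h0) (le_fsup f i0)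
  have h2 : (⨆ i, f i / c) = f i0 / c := by
    refine le_antisymm (fsup_le fun i => by gcongr ?_ / c; exact h0 i)
      (le_fsup (fun i => f i / c) i0)
  rw [h1, h2]

lemma maxPow_succ_apply (A : Matrix (Fin n) (Fin n) ℝ) (k : ℕ) (i j : Fin n) :
    maxPow A (k+1) i j = ⨆ l, maxPow A k i l * A l j := rfl

noncomputable def pathProd (A : Matrix (Fin n) (Fin n) ℝ) (p : ℕ → Fin n) (m : ℕ) : ℝ :=
  ∏ t ∈ Finset.range m, A (p t) (p (t+1))

lemma pathProd_pos {A : Matrix (Fin n) (Fin n) ℝ} (hpos : ∀ i j, 0 < A i j)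
    (p : ℕ → Fin n) (m : ℕ) : 0 < pathProd A p m :=
  Finset.prod_pos fun _ _ => hpos _ _

lemma pathProd_add (A : Matrix (Fin n) (Fin n) ℝ) (p : ℕ → Fin n) (a b : ℕ) :
    pathProd A p (a + b) = pathProd A p a * pathProd A (fun u => p (a + u)) b := by
  simp only [pathProd, Finset.prod_range_add]
  congr 1

lemma pathProd_congr {A : Matrix (Fin n) (Fin n) ℝ} {p q : ℕ → Fin n} (m : ℕ)
    (h : ∀ u, u ≤ m → p u = q u) : pathProd A p m = pathProd A q m := by
  unfold pathProd
  refine Finset.prod_congr rfl fun t ht => ?_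
  rw [Finset.mem_range] at ht
  rw [h t (by omega), h (t+1) (by omega)]

lemma pathProd_le_maxPow {A : Matrix (Fin n) (Fin n) ℝ} (hpos : ∀ i j, 0 < A i j)
    [Nonempty (Fin n)] (p : ℕ → Fin n) :
    ∀ m, pathProd A p m ≤ maxPow A m (p 0) (p m) := by
  intro m
  induction m with
  | zero => simp [pathProd, maxPow]
  | succ m ih =>
    rw [maxPow_succ_apply]
    calc pathProd A p (m+1) = pathProd A p m * A (p m) (p (m+1)) := by
          simp [pathProd, Finset.prod_range_succ]
      _ ≤ maxPow A m (p 0) (p m) * A (p m) (p (m+1)) :=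
          mul_le_mul_of_nonneg_right ih (hpos _ _).le
      _ ≤ ⨆ l, maxPow A m (p 0) l * A l (p (m+1)) :=
          le_fsup (fun l => maxPow A m (p 0) l * A l (p (m+1))) (p m)

lemma maxPow_pos {A : Matrix (Fin n) (Fin n) ℝ} (hpos : ∀ i j, 0 < A i j)
    [Nonempty (Fin n)] {m : ℕ} (hm : 1 ≤ m) (i j : Fin n) : 0 < maxPow A m i j := by
  set p : ℕ → Fin n := fun t => if t = 0 then i else j with hp
  have h0 : p 0 = i := rfl
  have hm' : p m = j := by simp [hp, show m ≠ 0 by omega]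
  have := pathProd_le_maxPow hpos p m
  rw [h0, hm'] at this
  exact lt_of_lt_of_le (pathProd_pos hpos p m) this

lemma maxPow_one {A : Matrix (Fin n) (Fin n) ℝ} (hpos : ∀ i j, 0 < A i j)
    [Nonempty (Fin n)] (i j : Fin n) : maxPow A 1 i j = A i j := by
  rw [maxPow_succ_apply]
  refine le_antisymm (fsup_le fun l => ?_) ?_
  · by_cases h : i = l
    · simp [maxPow, h]
    · rw [show maxPow A 0 i l = 0 by simp [maxPow, h], zero_mul]
      exact (hpos i j).le
  · have := le_fsup (fun l => maxPow A 0 i l * A l j) i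
    simpa [maxPow] using this

lemma exists_path {A : Matrix (Fin n) (Fin n) ℝ} (hpos : ∀ i j, 0 < A i j)
    [Nonempty (Fin n)] :
    ∀ m i j, ∃ p : ℕ → Fin n, p 0 = i ∧ p (m+1) = j ∧
      maxPow A (m+1) i j = pathProd A p (m+1) := by
  intro m
  induction m with
  | zero =>
    intro i j
    refine ⟨fun t => if t = 0 then i else j, rfl, rfl, ?_⟩
    rw [maxPow_one hpos]
    simp [pathProd]
  | succ m ih =>
    intro i j
    obtain ⟨l, hl⟩ := fsup_attained (fun l => maxPow A (m+1) i l * A l j)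
    obtain ⟨p, hp0, hpm, hpe⟩ := ih i l
    refine ⟨fun t => if t ≤ m+1 then p t else j, by simp [hp0], by simp, ?_⟩
    rw [maxPow_succ_apply, hl]
    have h1 : pathProd A (fun t => if t ≤ m+1 then p t else j) (m+2)
        = pathProd A (fun t => if t ≤ m+1 then p t else j) (m+1) *
          A (if m+1 ≤ m+1 then p (m+1) else j) (if m+2 ≤ m+1 then p (m+2) else j) := by
      simp [pathProd, Finset.prod_range_succ]
    rw [h1, pathProd_congr (A := A) (m+1) (q := p) (fun u hu => by simp [hu]), ← hpe]
    simp [hpm]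

lemma maxPow_le_sup {B : Matrix (Fin n) (Fin n) ℝ} (hpos : ∀ i j, 0 < B i j)
    [Nonempty (Fin n)] (hn : 1 ≤ n)
    (htr : ∀ c, 1 ≤ c → c ≤ n → ∀ i, maxPow B c i i ≤ 1) :
    ∀ m, 1 ≤ m → ∀ i j, maxPow B m i j ≤ ⨆ k : Fin n, maxPow B (k.1+1) i j := by
  intro m
  induction m using Nat.strong_induction_on with
  | _ m IH =>
    intro hm i j
    by_cases hmn : m ≤ n
    · have he : maxPow B m i j = maxPow B ((⟨m-1, by omega⟩ : Fin n).1 + 1) i j := by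
        congr 1
        show m = m - 1 + 1
        omega
      rw [he]
      exact le_fsup (fun k : Fin n => maxPow B (k.1+1) i j) ⟨m-1, by omega⟩
    · push_neg at hmn
      obtain ⟨p, hp0, hpm, hpe⟩ := exists_path hpos (m-1) i j
      rw [show m - 1 + 1 = m by omega] at hpm hpe
      obtain ⟨a, b, hab, heq⟩ := Fintype.exists_ne_map_eq_of_card_lt
        (fun u : Fin (n+1) => p u.1) (by simp)
      -- wlog a < b
      obtain ⟨s, t, hst, hps⟩ : ∃ s t : ℕ, s < t ∧ t ≤ n ∧ p s = p t := by
        rcases lt_or_gt_of_ne (fun h => hab (by exact_mod_cast Fin.ext h)) with h | h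
        · exact ⟨a.1, b.1, h, by omega, heq⟩
        · exact ⟨b.1, a.1, h, by omega, heq.symm⟩
      obtain ⟨htn, hps⟩ := hps
      set c := t - s with hc
      have hc1 : 1 ≤ c := by omega
      have hcn : c ≤ n := by omega
      have htm : t ≤ m := by omega
      -- decomposition of p
      have hdecomp : pathProd B p m =
          pathProd B p s * (pathProd B (fun u => p (s + u)) c *
            pathProd B (fun u => p (t + u)) (m - t)) := by
        conv_lhs => rw [show m = s + (c + (m - t)) by omega]
        rw [pathProd_add, pathProd_add]
        congr 1
        congr 1
        exact pathProd_congr _ (fun u _ => by rw [show s + (c + u) = t + u by omega])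
      -- spliced path
      set q : ℕ → Fin n := fun u => if u < s then p u else p (u + c) with hq
      have hqp : ∀ u, u ≤ s → q u = p u := by
        intro u hu
        by_cases h : u < s
        · simp [hq, h]
        · have hus : u = s := by omega
          simp [hq, hus, show s + c = t by omega, ← hps]
      have hqsplit : pathProd B q (m - c) =
          pathProd B p s * pathProd B (fun u => p (t + u)) (m - t) := by
        rw [show m - c = s + (m - t) by omega, pathProd_add]
        congr 1
        · exact pathProd_congr _ (fun u hu => hqp u hu)
        · refine pathProd_congr _ (fun u _ => ?_)
          simp only [hq, show ¬ (s + u < s) by omega, if_false]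
          rw [show s + u + c = t + u by omega]
      have hcyc : pathProd B (fun u => p (s + u)) c ≤ 1 := by
        have h1 := pathProd_le_maxPow hpos (fun u => p (s + u)) c
        simp only [Nat.add_zero] at h1
        rw [show s + c = t by omega, ← hps] at h1
        exact h1.trans (htr c hc1 hcn (p s))
      have hq0 : q 0 = i := by rw [hqp 0 (Nat.zero_le s), hp0]
      have hqmc : q (m - c) = j := by
        have : ¬ (m - c < s) := by omega
        simp only [hq, this, if_false]
        rw [show m - c + c = m by omega, hpm]
      have hpos1 : 0 < pathProd B p s := pathProd_pos hpos _ _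
      have hpos2 : 0 < pathProd B (fun u => p (t + u)) (m - t) := pathProd_pos hpos _ _
      have h1 : maxPow B m i j ≤ pathProd B q (m - c) := by
        rw [hpe, hdecomp, hqsplit]
        have h3 := mul_le_mul_of_nonneg_right hcyc hpos2.le
        have h4 := mul_le_mul_of_nonneg_left h3 hpos1.le
        simpa using h4
      have h2 : pathProd B q (m - c) ≤ maxPow B (m - c) i j := by
        have := pathProd_le_maxPow hpos q (m - c)
        rwa [hq0, hqmc] at this
      exact h1.trans (h2.trans (IH (m - c) (by omega) (by omega) i j))

lemma maxPow_div {A : Matrix (Fin n) (Fin n) ℝ} {lam : ℝ} (hl : 0 < lam)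
    [Nonempty (Fin n)] :
    ∀ m i j, maxPow (fun i j => A i j / lam) m i j = maxPow A m i j / lam ^ m := by
  intro m
  induction m with
  | zero => intro i j; simp [maxPow]
  | succ k ih =>
    intro i j
    show (⨆ l, maxPow (fun i j => A i j / lam) k i l * (A l j / lam)) =
      (⨆ l, maxPow A k i l * A l j) / lam ^ (k + 1)
    rw [fsup_div _ (by positivity : (0:ℝ) < lam ^ (k+1))]
    congr 1
    funext l
    rw [ih i l]
    rw [div_mul_div_comm, ← pow_succ]


lemma lam_le {A : Matrix (Fin n) (Fin n) ℝ} (hpos : ∀ i j, 0 < A i j) [Nonempty (Fin n)]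
    (x : Fin n → ℝ) (hx : ∀ j, 0 < x j) (k : Fin n) :
    (tropTr (maxPow A (k.1 + 1))) ^ (((k.1:ℝ)+1)⁻¹) ≤ ⨆ i, ⨆ j, A i j * x j / x i := by
  set M := ⨆ i, ⨆ j, A i j * x j / x i with hM
  have i0 : Fin n := Classical.arbitrary _
  have hMb : ∀ i j, A i j * x j / x i ≤ M := fun i j =>
    (le_fsup (fun j => A i j * x j / x i) j).trans
      (le_fsup (fun i => ⨆ j, A i j * x j / x i) i)
  have hM0 : 0 < M :=
    lt_of_lt_of_le (div_pos (mul_pos (hpos i0 i0) (hx i0)) (hx i0)) (hMb i0 i0)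
  have hA : ∀ i j, A i j ≤ M * x i / x j := by
    intro i j
    have h := hMb i j
    rw [div_le_iff₀ (hx i)] at h
    rw [le_div_iff₀ (hx j)]
    linarith
  have claim : ∀ m i j, maxPow A m i j ≤ M ^ m * x i / x j := by
    intro m
    induction m with
    | zero =>
      intro i j
      by_cases h : i = j
      · have : maxPow A 0 i j = 1 := by simp [maxPow, h]
        rw [this, h, pow_zero, one_mul, div_self (hx j).ne']
      · have : maxPow A 0 i j = 0 := by simp [maxPow, h]
        rw [this]
        exact div_nonneg (mul_nonneg (pow_nonneg hM0.le 0) (hx i).le) (hx j).le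
    | succ m ih =>
      intro i j
      rw [maxPow_succ_apply]
      refine fsup_le fun l => ?_
      calc maxPow A m i l * A l j ≤ (M ^ m * x i / x l) * (M * x l / x j) :=
            mul_le_mul (ih i l) (hA l j) (hpos l j).le
              (div_nonneg (mul_nonneg (pow_nonneg hM0.le m) (hx i).le) (hx l).le)
        _ = M ^ (m+1) * x i / x j := by
            have hl0 := (hx l).ne'
            have hj0 := (hx j).ne'
            field_simp
            ring
  have htr : tropTr (maxPow A (k.1+1)) ≤ M ^ (k.1+1) := by
    refine fsup_le fun i => ?_
    have h := claim (k.1+1) i i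
    rwa [mul_div_assoc, div_self (hx i).ne', mul_one] at h
  have ht0 : 0 < tropTr (maxPow A (k.1+1)) :=
    lt_of_lt_of_le (maxPow_pos hpos (by omega) i0 i0)
      (le_fsup (fun i => maxPow A (k.1+1) i i) i0)
  calc (tropTr (maxPow A (k.1 + 1))) ^ (((k.1:ℝ)+1)⁻¹)
      ≤ (M ^ (k.1+1)) ^ (((k.1:ℝ)+1)⁻¹) :=
        Real.rpow_le_rpow ht0.le htr (by positivity)
    _ = M := by
        rw [← Real.rpow_natCast M (k.1+1), ← Real.rpow_mul hM0.le]
        push_cast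
        rw [mul_inv_cancel₀ (by positivity : ((k.1:ℝ)+1) ≠ 0), Real.rpow_one]

end TropSR

open TropSR

/-- The infimum of the log-Chebyshev objective `max_{i,j} a i j * x j / x i` over
positive vectors `x` equals the max-algebraic spectral radius
`λ = max_{1 ≤ k ≤ n} (tr⊗(A^{⊗k}))^{1/k}`, and the infimum is attained. -/
theorem logChebyshev_min_eq_tropical_spectral_radius
    (n : ℕ) (hn : 1 ≤ n) (A : Matrix (Fin n) (Fin n) ℝ)
    (hpos : ∀ i j, 0 < A i j) :
    sInf {v : ℝ | ∃ x : Fin n → ℝ, (∀ j, 0 < x j) ∧ v = ⨆ i, ⨆ j, A i j * x j / x i} =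
        (⨆ k : Fin n, (tropTr (maxPow A (k.1 + 1))) ^ (((k.1 : ℝ) + 1)⁻¹)) ∧
      ∃ x : Fin n → ℝ, (∀ j, 0 < x j) ∧
        (⨆ i, ⨆ j, A i j * x j / x i) =
          ⨆ k : Fin n, (tropTr (maxPow A (k.1 + 1))) ^ (((k.1 : ℝ) + 1)⁻¹) := by
  haveI : Nonempty (Fin n) := ⟨⟨0, hn⟩⟩
  have i0 : Fin n := ⟨0, hn⟩
  set lam := ⨆ k : Fin n, (tropTr (maxPow A (k.1 + 1))) ^ (((k.1 : ℝ) + 1)⁻¹) with hlam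
  have hlam0 : 0 < lam := by
    have h1 : (0:ℝ) < tropTr (maxPow A 1) :=
      lt_of_lt_of_le (maxPow_pos hpos le_rfl i0 i0) (le_fsup (fun i => maxPow A 1 i i) i0)
    have h2 : (tropTr (maxPow A 1)) ^ ((((⟨0,hn⟩ : Fin n).1:ℝ)+1)⁻¹) ≤ lam :=
      le_fsup (fun k : Fin n => (tropTr (maxPow A (k.1 + 1))) ^ (((k.1 : ℝ) + 1)⁻¹)) ⟨0, hn⟩
    exact lt_of_lt_of_le (Real.rpow_pos_of_pos h1 _) h2
  have hlamc : ∀ c, 1 ≤ c → c ≤ n → ∀ i, maxPow A c i i ≤ lam ^ c := by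
    intro c h1 h2 i
    have ht0 : 0 < tropTr (maxPow A c) :=
      lt_of_lt_of_le (maxPow_pos hpos h1 i0 i0) (le_fsup (fun i => maxPow A c i i) i0)
    have hterm : (tropTr (maxPow A ((c-1) + 1))) ^ ((((c-1:ℕ):ℝ)+1)⁻¹) ≤ lam :=
      le_fsup (fun k : Fin n => (tropTr (maxPow A (k.1 + 1))) ^ (((k.1 : ℝ) + 1)⁻¹))
        ⟨c-1, by omega⟩
    rw [show c - 1 + 1 = c by omega,
      show (((c-1:ℕ):ℝ)+1) = (c:ℝ) by rw [Nat.cast_sub h1, Nat.cast_one]; ring] at hterm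
    have hraise := Real.rpow_le_rpow (Real.rpow_nonneg ht0.le _) hterm (Nat.cast_nonneg c)
    rw [← Real.rpow_mul ht0.le, inv_mul_cancel₀ (Nat.cast_ne_zero.mpr (by omega) : (c:ℝ) ≠ 0),
      Real.rpow_one, Real.rpow_natCast] at hraise
    exact (le_fsup (fun i => maxPow A c i i) i).trans hraise
  set B : Matrix (Fin n) (Fin n) ℝ := fun i j => A i j / lam with hB
  have hBpos : ∀ i j, 0 < B i j := fun i j => div_pos (hpos i j) hlam0
  have htrB : ∀ c, 1 ≤ c → c ≤ n → ∀ i, maxPow B c i i ≤ 1 := by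
    intro c h1 h2 i
    rw [hB, maxPow_div hlam0]
    exact (div_le_one (by positivity)).mpr (hlamc c h1 h2 i)
  set x : Fin n → ℝ := fun j => ⨆ k : Fin n, maxPow B (k.1+1) j i0 with hxdef
  have hx : ∀ j, 0 < x j := fun j =>
    lt_of_lt_of_le (maxPow_pos hBpos le_rfl j i0)
      (le_fsup (fun k : Fin n => maxPow B (k.1+1) j i0) ⟨0, hn⟩)
  have key : ∀ i j, B i j * x j ≤ x i := by
    intro i j
    obtain ⟨k, hk⟩ := fsup_attained (fun k : Fin n => maxPow B (k.1+1) j i0)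
    obtain ⟨p, hp0, hpm, hpe⟩ := exists_path hBpos k.1 j i0
    set p' : ℕ → Fin n := fun t => if t = 0 then i else p (t-1) with hp'
    have hpre : B i j * pathProd B p (k.1+1) = pathProd B p' (k.1+2) := by
      have hsp : pathProd B p' (k.1+2) =
          (∏ t ∈ Finset.range (k.1+1), B (p' (t+1)) (p' (t+1+1))) * B (p' 0) (p' 1) := by
        rw [pathProd, Finset.prod_range_succ']
      have h1 : ∀ t, p' (t+1) = p t := fun t => by simp [hp']
      rw [hsp]
      have h2 : (∏ t ∈ Finset.range (k.1+1), B (p' (t+1)) (p' (t+1+1)))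
          = pathProd B p (k.1+1) := by
        refine Finset.prod_congr rfl fun t _ => ?_
        rw [h1 t, h1 (t+1)]
      rw [h2]
      have h3 : p' 0 = i := by simp [hp']
      have h4 : p' 1 = j := by rw [h1 0, hp0]
      rw [h3, h4, mul_comm]
    have hend : p' (k.1+2) = i0 := by
      simp only [hp']
      rw [if_neg (by omega), show k.1 + 2 - 1 = k.1 + 1 by omega, hpm]
    calc B i j * x j = B i j * pathProd B p (k.1+1) := by
          rw [show x j = ⨆ k : Fin n, maxPow B (k.1+1) j i0 from rfl, hk, hpe]
      _ = pathProd B p' (k.1+2) := hpre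
      _ ≤ maxPow B (k.1+2) (p' 0) (p' (k.1+2)) := pathProd_le_maxPow hBpos p' _
      _ = maxPow B (k.1+2) i i0 := by rw [show p' 0 = i by simp [hp'], hend]
      _ ≤ ⨆ k' : Fin n, maxPow B (k'.1+1) i i0 :=
          maxPow_le_sup hBpos hn htrB (k.1+2) (by omega) i i0
      _ = x i := rfl
  have hupper : (⨆ i, ⨆ j, A i j * x j / x i) ≤ lam := by
    refine fsup_le fun i => fsup_le fun j => ?_
    rw [div_le_iff₀ (hx i)]
    have h := key i j
    calc A i j * x j = lam * (B i j * x j) := by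
          have hl := hlam0.ne'
          rw [show B i j = A i j / lam from rfl]
          field_simp
      _ ≤ lam * x i := mul_le_mul_of_nonneg_left h hlam0.le
  have heq : (⨆ i, ⨆ j, A i j * x j / x i) = lam :=
    le_antisymm hupper (fsup_le fun k => lam_le hpos x hx k)
  have hmem : lam ∈ {v : ℝ | ∃ x : Fin n → ℝ, (∀ j, 0 < x j) ∧
      v = ⨆ i, ⨆ j, A i j * x j / x i} := ⟨x, hx, heq.symm⟩
  have hlb : ∀ v ∈ {v : ℝ | ∃ x : Fin n → ℝ, (∀ j, 0 < x j) ∧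
      v = ⨆ i, ⨆ j, A i j * x j / x i}, lam ≤ v := by
    rintro v ⟨y, hy, rfl⟩
    exact fsup_le fun k => lam_le hpos y hy k
  exact ⟨le_antisymm (csInf_le ⟨lam, fun v hv => hlb v hv⟩ hmem) (le_csInf ⟨lam, hmem⟩ hlb),
    x, hx, heq⟩
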